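/- Let n ≥ 2 be even, let Z = {−1, 1}, let D be the uniform distribution on Z, and define f(w; z) = (1/(4√n) + z)·|w| for w ∈ ℝ. Then: (a) the population loss F(w) = E_{z∼D}[f(w;z)] equals |w|/(4√n), is convex, and has unique minimizer w* = 0 with F(0) = 0; and (b) for every η > 0, every T ≥ 1, and every initial point w₁ ≠ 0, the gradient descent iterates w_{t+1} = w_t − η·sign(w_t)·(1/(4√n) + (1/n)∑_{i=1}^n z_i) on an i.i.d. sample z₁,…,z_n ∼ D (with sign(0) = 0) have average ŵ_T = (1/T)∑_{t=1}^T w_t satisfying, with probability at least 1/(15e) over the sample, F(ŵ_T) ≥ |w₁|/(4√n) + η(T−1)/(32n); in particular E[F(ŵ_T)] − inf_{w∈ℝ} F(w) ≥ η(T−1)/(480·e·n). -/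

import Mathlib

open scoped Classical

/-- The value of `z ∈ {−1, 1}` encoded by a boolean (`true ↦ +1`, `false ↦ −1`). -/
noncomputable def zval (b : Bool) : ℝ := if b then 1 else -1

/-- The loss `f(w; z) = (1/(4√n) + z)·|w|`. -/
noncomputable def f7 (n : ℕ) (w z : ℝ) : ℝ := (1 / (4 * Real.sqrt n) + z) * |w|

/-- The population loss `F(w) = |w|/(4√n)`. -/
noncomputable def F7 (n : ℕ) (w : ℝ) : ℝ := |w| / (4 * Real.sqrt n)

/-- Gradient descent iterates on the empirical loss: `w_{t+1} = w_t − η·sign(w_t)·(1/(4√n) + s)`,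
where `s = (1/n)∑ᵢ zᵢ` is the empirical mean of the sample. -/
noncomputable def gd7 (n : ℕ) (η w₁ s : ℝ) : ℕ → ℝ
  | 0 => w₁
  | t + 1 => gd7 n η w₁ s t - η * Real.sign (gd7 n η w₁ s t) * (1 / (4 * Real.sqrt n) + s)


lemma cb_sq (m : ℕ) : (Nat.centralBinom m) ^ 2 * (3 * m + 1) ≤ 16 ^ m := by
  induction m with
  | zero => simp [Nat.centralBinom]
  | succ m ih =>
    have hid := Nat.succ_mul_centralBinom_succ m
    set C := Nat.centralBinom m with hC
    set C' := Nat.centralBinom (m + 1) with hC'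
    have hpoly : (2 * (2 * m + 1)) ^ 2 * (3 * (m + 1) + 1) ≤ 16 * (m + 1) ^ 2 * (3 * m + 1) := by
      nlinarith
    have key : ((m + 1) ^ 2 * (C' ^ 2 * (3 * (m + 1) + 1))) * (3 * m + 1)
        ≤ ((m + 1) ^ 2 * 16 ^ (m + 1)) * (3 * m + 1) := by
      have h1 : ((m + 1) * C') ^ 2 = (2 * (2 * m + 1)) ^ 2 * C ^ 2 := by
        rw [hid]; ring
      calc ((m + 1) ^ 2 * (C' ^ 2 * (3 * (m + 1) + 1))) * (3 * m + 1)
          = (2 * (2 * m + 1)) ^ 2 * (3 * (m + 1) + 1) * (C ^ 2 * (3 * m + 1)) := by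
            rw [show (m + 1) ^ 2 * (C' ^ 2 * (3 * (m + 1) + 1)) * (3 * m + 1)
                = ((m + 1) * C') ^ 2 * ((3 * (m + 1) + 1) * (3 * m + 1)) from by ring, h1]
            ring
        _ ≤ (2 * (2 * m + 1)) ^ 2 * (3 * (m + 1) + 1) * 16 ^ m :=
            Nat.mul_le_mul_left _ ih
        _ ≤ (16 * (m + 1) ^ 2 * (3 * m + 1)) * 16 ^ m := Nat.mul_le_mul_right _ hpoly
        _ = ((m + 1) ^ 2 * 16 ^ (m + 1)) * (3 * m + 1) := by rw [pow_succ]; ring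
    have h2 := Nat.le_of_mul_le_mul_right key (by omega : 0 < 3 * m + 1)
    exact Nat.le_of_mul_le_mul_left h2 (by positivity)


/-- real bound: choose n (n/2) * √n ≤ 2^n for n = m + m -/
lemma choose_sqrt_le (m : ℕ) (hm : 1 ≤ m) :
    ((m + m).choose m : ℝ) * Real.sqrt (m + m) ≤ 2 ^ (m + m) := by
  have hC : (m + m).choose m = Nat.centralBinom m := by
    rw [Nat.centralBinom]; congr 1; omega
  have hsq := cb_sq m
  have hreal : ((m + m).choose m : ℝ) ^ 2 * ((m : ℝ) + m) ≤ (2 ^ (m + m)) ^ 2 := by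
    have h1 : ((Nat.centralBinom m : ℕ) : ℝ) ^ 2 * ((3 * m + 1 : ℕ) : ℝ) ≤ ((16 ^ m : ℕ) : ℝ) := by
      exact_mod_cast hsq
    push_cast at h1
    have h2 : ((m : ℝ) + m) ≤ 3 * m + 1 := by
      have : (1 : ℝ) ≤ m := by exact_mod_cast hm
      linarith
    have h3 : ((16 : ℝ) ^ m) = (2 ^ (m + m)) ^ 2 := by
      rw [← pow_mul, show (m + m) * 2 = 4 * m by ring, pow_mul]
      norm_num
    rw [hC]
    push_cast
    nlinarith [sq_nonneg ((Nat.centralBinom m : ℝ))]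
  calc ((m + m).choose m : ℝ) * Real.sqrt (m + m)
      = Real.sqrt (((m + m).choose m : ℝ) ^ 2 * ((m : ℝ) + m)) := by
        rw [Real.sqrt_mul (by positivity), Real.sqrt_sq (by positivity)]
    _ ≤ Real.sqrt ((2 ^ (m + m)) ^ 2) := Real.sqrt_le_sqrt hreal
    _ = 2 ^ (m + m) := Real.sqrt_sq (by positivity)

/-- flipping all bits negates the sum -/
lemma sumz_flip (n : ℕ) (z : Fin n → Bool) :
    ∑ i, zval (!(z i)) = -∑ i, zval (z i) := by
  rw [← Finset.sum_neg_distrib]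
  exact Finset.sum_congr rfl fun i _ => by cases z i <;> simp [zval]

/-- the sum in terms of the count of trues -/
lemma sumz_count (n : ℕ) (z : Fin n → Bool) :
    ∑ i, zval (z i) = 2 * ((Finset.univ.filter fun i => z i = true).card : ℝ) - n := by
  have h : ∀ b : Bool, zval b = 2 * (if b = true then (1:ℝ) else 0) - 1 := by
    intro b; cases b <;> norm_num [zval]
  rw [Finset.sum_congr rfl fun i _ => h (z i), Finset.sum_sub_distrib, ← Finset.mul_sum,
    Finset.sum_boole, Finset.sum_const]
  simp

lemma fiber_le (n k : ℕ) :
    (Finset.univ.filter fun z : Fin n → Bool =>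
      (Finset.univ.filter fun i => z i = true).card = k).card ≤ n.choose k := by
  have h := Finset.card_le_card_of_injOn
    (f := fun z : Fin n → Bool => Finset.univ.filter fun i => z i = true)
    (s := Finset.univ.filter fun z : Fin n → Bool =>
      (Finset.univ.filter fun i => z i = true).card = k)
    (t := Finset.powersetCard k Finset.univ)
    (fun z hz => Finset.mem_powersetCard.mpr
      ⟨Finset.subset_univ _, (Finset.mem_filter.mp hz).2⟩)
    (by
      intro z hz z' hz' heq
      funext i
      have := Finset.ext_iff.mp heq i
      simp only [Finset.mem_filter, Finset.mem_univ, true_and] at this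
      cases hzi : z i <;> cases hzi' : z' i <;> simp_all)
  calc _ ≤ (Finset.powersetCard k (Finset.univ : Finset (Fin n))).card := h
    _ = n.choose k := by rw [Finset.card_powersetCard]; simp

lemma count7 (n : ℕ) (hn : 2 ≤ n) (hev : Even n) :
    1 / (15 * Real.exp 1) ≤
      (((Finset.univ.filter fun z : Fin n → Bool =>
        ∑ i, zval (z i) ≤ -(Real.sqrt n / 2)).card : ℝ) * ((1:ℝ)/2) ^ n) := by
  have hn0 : (0:ℝ) < n := by positivity
  have hsr : (0:ℝ) < Real.sqrt n := Real.sqrt_pos.mpr hn0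
  have hn2 : (2:ℝ) ≤ n := by exact_mod_cast hn
  have hsn : Real.sqrt n ≤ n := by
    calc Real.sqrt n ≤ Real.sqrt ((n:ℝ)^2) := Real.sqrt_le_sqrt (by nlinarith)
    _ = n := Real.sqrt_sq (by positivity)
  have hexp : (40 : ℝ) ≤ 15 * Real.exp 1 := by nlinarith [Real.exp_one_gt_d9]
  have h40 : 1 / (15 * Real.exp 1) ≤ 1 / 40 :=
    one_div_le_one_div_of_le (by norm_num) hexp
  refine le_trans h40 ?_
  by_cases h6 : n < 6
  · -- small case: the all-false vector is in the event
    have hmem : (fun _ => false : Fin n → Bool) ∈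
        Finset.univ.filter fun z : Fin n → Bool =>
          ∑ i, zval (z i) ≤ -(Real.sqrt n / 2) := by
      refine Finset.mem_filter.mpr ⟨Finset.mem_univ _, ?_⟩
      have : ∑ _i : Fin n, zval false = -(n:ℝ) := by simp [zval]
      rw [this]
      linarith
    have hcard : 1 ≤ ((Finset.univ.filter fun z : Fin n → Bool =>
        ∑ i, zval (z i) ≤ -(Real.sqrt n / 2)).card : ℝ) := by
      exact_mod_cast Finset.card_pos.mpr ⟨_, hmem⟩
    have hp : ((1:ℝ)/2) ^ 5 ≤ ((1:ℝ)/2) ^ n :=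
      pow_le_pow_of_le_one (by norm_num) (by norm_num) (by omega)
    calc (1:ℝ)/40 ≤ ((1:ℝ)/2)^5 := by norm_num
      _ ≤ ((1:ℝ)/2)^n := hp
      _ ≤ _ := le_mul_of_one_le_left (by positivity) hcard
  · -- main case: n ≥ 6
    push_neg at h6
    obtain ⟨m, hm⟩ := hev
    have hm3 : 3 ≤ m := by omega
    set a : ℝ := Real.sqrt n / 2 with hadef
    have ha : 0 < a := by positivity
    set kz : (Fin n → Bool) → ℕ :=
      fun z => (Finset.univ.filter fun i => z i = true).card with hkz
    set A := Finset.univ.filter fun z : Fin n → Bool => ∑ i, zval (z i) ≤ -a with hA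
    set B := Finset.univ.filter fun z : Fin n → Bool => a ≤ ∑ i, zval (z i) with hB
    set M := Finset.univ.filter fun z : Fin n → Bool => |∑ i, zval (z i)| < a with hM
    -- A and B have the same cardinality
    have hAB : A.card = B.card := by
      apply Finset.card_bij' (fun z _ => fun i => !(z i)) (fun z _ => fun i => !(z i))
      · intro z hz
        rw [hB, Finset.mem_filter]
        refine ⟨Finset.mem_univ _, ?_⟩
        rw [sumz_flip]
        have := (Finset.mem_filter.mp hz).2
        linarith
      · intro z hz
        rw [hA, Finset.mem_filter]
        refine ⟨Finset.mem_univ _, ?_⟩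
        rw [sumz_flip]
        have := (Finset.mem_filter.mp hz).2
        linarith
      · intro z _; funext i; simp
      · intro z _; funext i; simp
    -- partition of the cube
    have hsplit : A.card + (B.card + M.card) = 2 ^ n := by
      have h1 := Finset.card_filter_add_card_filter_not
        (s := (Finset.univ : Finset (Fin n → Bool)))
        (p := fun z => ∑ i, zval (z i) ≤ -a)
      have h2 := Finset.card_filter_add_card_filter_not
        (s := Finset.univ.filter fun z : Fin n → Bool => ¬ ∑ i, zval (z i) ≤ -a)
        (p := fun z => a ≤ ∑ i, zval (z i))
      rw [Finset.filter_filter, Finset.filter_filter] at h2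
      have eqB : (Finset.univ.filter fun z : Fin n → Bool =>
          (¬ ∑ i, zval (z i) ≤ -a) ∧ a ≤ ∑ i, zval (z i)) = B := by
        rw [hB]
        apply Finset.filter_congr
        intro z _
        constructor
        · exact fun h => h.2
        · intro h; exact ⟨fun h' => by linarith, h⟩
      have eqM : (Finset.univ.filter fun z : Fin n → Bool =>
          (¬ ∑ i, zval (z i) ≤ -a) ∧ ¬ a ≤ ∑ i, zval (z i)) = M := by
        rw [hM]
        apply Finset.filter_congr
        intro z _
        rw [abs_lt]
        constructor
        · intro h; exact ⟨by linarith [not_le.mp h.1], not_le.mp h.2⟩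
        · intro h; exact ⟨by push_neg; linarith [h.1], by push_neg; linarith [h.2]⟩
      rw [eqB, eqM] at h2
      have huniv : (Finset.univ : Finset (Fin n → Bool)).card = 2 ^ n := by simp
      rw [h2, ← huniv]
      exact h1
    -- bound on the middle part
    set j : ℕ := Nat.floor (Real.sqrt n / 4) with hj
    have hjr : (j : ℝ) ≤ Real.sqrt n / 4 := Nat.floor_le (by positivity)
    have hjm : j ≤ m := by
      have : (j:ℝ) ≤ m := by
        have hnm : (n:ℝ) = (m:ℝ) + m := by exact_mod_cast congrArg (Nat.cast : ℕ → ℝ) hm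
        nlinarith
      exact_mod_cast this
    have hmemf : ∀ z ∈ M, kz z ∈ Finset.Icc (m - j) (m + j) := by
      intro z hz
      have habs : |∑ i, zval (z i)| < a := (Finset.mem_filter.mp hz).2
      rw [sumz_count] at habs
      have hk4 : |((kz z : ℝ)) - m| < Real.sqrt n / 4 := by
        have h2 : (2:ℝ) * |((kz z : ℝ)) - m| = |2 * (kz z : ℝ) - n| := by
          rw [show (2:ℝ) * (kz z : ℝ) - n = 2 * (((kz z : ℝ)) - m) by
            push_cast [hm]; ring, abs_mul]
          norm_num
        rw [hadef] at habs
        linarith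
      rcases le_total (kz z) m with h | h
      · have h1 : ((m - kz z : ℕ) : ℝ) < Real.sqrt n / 4 := by
          rw [Nat.cast_sub h]
          calc ((m:ℝ) - kz z) ≤ |((kz z : ℝ)) - m| := by rw [abs_sub_comm]; exact le_abs_self _
            _ < _ := hk4
        have h2 : m - kz z ≤ j := Nat.le_floor h1.le
        rw [Finset.mem_Icc]; omega
      · have h1 : ((kz z - m : ℕ) : ℝ) < Real.sqrt n / 4 := by
          rw [Nat.cast_sub h]
          calc ((kz z : ℝ) - m) ≤ |((kz z : ℝ)) - m| := le_abs_self _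
            _ < _ := hk4
        have h2 : kz z - m ≤ j := Nat.le_floor h1.le
        rw [Finset.mem_Icc]; omega
    have hMcard : M.card ≤ (2 * j + 1) * n.choose m := by
      rw [Finset.card_eq_sum_card_fiberwise hmemf]
      calc ∑ k ∈ Finset.Icc (m - j) (m + j), (M.filter fun z => kz z = k).card
          ≤ ∑ _k ∈ Finset.Icc (m - j) (m + j), n.choose m := by
            apply Finset.sum_le_sum
            intro k _
            calc (M.filter fun z => kz z = k).card
                ≤ (Finset.univ.filter fun z : Fin n → Bool => kz z = k).card := by
                  apply Finset.card_le_card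
                  apply Finset.filter_subset_filter
                  rw [hM]; exact Finset.filter_subset _ _
              _ ≤ n.choose k := fiber_le n k
              _ ≤ n.choose (n / 2) := Nat.choose_le_middle k n
              _ = n.choose m := by congr 1; omega
        _ = (2 * j + 1) * n.choose m := by
            rw [Finset.sum_const, smul_eq_mul, Nat.card_Icc]
            congr 1
            omega
    -- real-valued bound on M
    have hC : (n.choose m : ℝ) * Real.sqrt n ≤ 2 ^ n := by
      have h := choose_sqrt_le m (by omega)
      rw [show m + m = n from hm.symm] at h
      have hnm : ((m:ℝ) + m) = (n:ℝ) := by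
        rw [hm]; push_cast; ring
      rwa [hnm] at h
    have hMr : (M.card : ℝ) * Real.sqrt n ≤ (Real.sqrt n / 2 + 1) * 2 ^ n := by
      calc (M.card : ℝ) * Real.sqrt n
          ≤ ((2 * j + 1 : ℕ) : ℝ) * ((n.choose m : ℝ) * Real.sqrt n) := by
            rw [← mul_assoc]
            apply mul_le_mul_of_nonneg_right _ hsr.le
            exact_mod_cast Nat.cast_le.mpr hMcard
        _ ≤ (Real.sqrt n / 2 + 1) * ((n.choose m : ℝ) * Real.sqrt n) := by
            apply mul_le_mul_of_nonneg_right _ (by positivity)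
            push_cast
            linarith
        _ ≤ (Real.sqrt n / 2 + 1) * 2 ^ n := by
            apply mul_le_mul_of_nonneg_left hC (by positivity)
    -- combine
    have h2A : 2 * (A.card : ℝ) + (M.card : ℝ) = 2 ^ n := by
      have : (A.card + (B.card + M.card) : ℕ) = 2 ^ n := hsplit
      have h := congrArg (Nat.cast : ℕ → ℝ) this
      push_cast at h
      rw [← hAB] at h
      linarith
    have hs6 : (12:ℝ)/5 ≤ Real.sqrt n := by
      have h1 : Real.sqrt (((12:ℝ)/5)^2) ≤ Real.sqrt n := by
        apply Real.sqrt_le_sqrt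
        have : (6:ℝ) ≤ n := by exact_mod_cast (by omega : (6:ℕ) ≤ n)
        norm_num
        linarith
      rwa [Real.sqrt_sq (by norm_num)] at h1
    have hpow : ((1:ℝ)/2) ^ n = 1 / 2 ^ n := by rw [div_pow, one_pow]
    rw [hpow, ← mul_div_assoc, mul_one, div_le_div_iff₀ (by norm_num) (by positivity)]
    apply le_of_mul_le_mul_right _ hsr
    have e2 : (2 * (A.card : ℝ)) * Real.sqrt n + (M.card : ℝ) * Real.sqrt n
        = 2 ^ n * Real.sqrt n := by
      rw [← add_mul, h2A]
    have h9 : (0:ℝ) ≤ 2 ^ n * (9 * Real.sqrt n - 20) := by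
      apply mul_nonneg (by positivity)
      linarith
    nlinarith [hMr, e2, h9]


lemma gd7_neg (n : ℕ) (η w₁ s : ℝ) (t : ℕ) : gd7 n η (-w₁) s t = -gd7 n η w₁ s t := by
  induction t with
  | zero => rfl
  | succ t ih => simp only [gd7, ih, Real.sign_neg]; ring

lemma gd7_pos (n : ℕ) (η w₁ s : ℝ) (hw : 0 < w₁) (hη : 0 ≤ η)
    (hc : 1 / (4 * Real.sqrt n) + s ≤ 0) (t : ℕ) :
    gd7 n η w₁ s t = w₁ - η * (1 / (4 * Real.sqrt n) + s) * t := by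
  induction t with
  | zero => simp [gd7]
  | succ t ih =>
    have hpos : 0 < gd7 n η w₁ s t := by
      rw [ih]
      have : 0 ≤ -(η * (1 / (4 * Real.sqrt n) + s) * t) := by
        have : η * (1 / (4 * Real.sqrt n) + s) * t ≤ 0 := by
          apply mul_nonpos_of_nonpos_of_nonneg _ (Nat.cast_nonneg t)
          exact mul_nonpos_of_nonneg_of_nonpos hη hc
        linarith
      linarith
    rw [gd7, Real.sign_of_pos hpos, ih]
    push_cast
    ring

lemma key_pos (n : ℕ) (hn : 2 ≤ n) (η : ℝ) (hη : 0 < η) (T : ℕ) (hT : 1 ≤ T) (w₁ : ℝ)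
    (hw : 0 < w₁) (s : ℝ) (hs : s ≤ -(1 / (2 * Real.sqrt n))) :
    |w₁| / (4 * Real.sqrt n) + η * ((T : ℝ) - 1) / (32 * n) ≤
      F7 n ((T : ℝ)⁻¹ * ∑ t ∈ Finset.range T, gd7 n η w₁ s t) := by
  set r := Real.sqrt n with hrdef
  have hr : 0 < r := Real.sqrt_pos.mpr (by positivity)
  have hr2 : r * r = n := Real.mul_self_sqrt (by positivity)
  set c : ℝ := 1 / (4 * r) + s with hcdef
  clear_value c
  have hc : c ≤ -(1 / (4 * r)) := by
    have : 1 / (4 * r) - 1 / (2 * r) = -(1 / (4 * r)) := by field_simp; ring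
    calc c ≤ 1 / (4 * r) - 1 / (2 * r) := by simp only [hcdef]; linarith
    _ = -(1 / (4 * r)) := this
  have hc0 : c ≤ 0 := le_trans hc (neg_nonpos.mpr (by positivity))
  have hT1 : (1 : ℝ) ≤ (T : ℝ) := by exact_mod_cast hT
  have hT0 : (0 : ℝ) < (T : ℝ) := by linarith
  have hgauss : (∑ t ∈ Finset.range T, (t : ℝ)) = (T : ℝ) * ((T : ℝ) - 1) / 2 := by
    have h3 := congrArg (Nat.cast : ℕ → ℝ) (Finset.sum_range_id_mul_two T)
    push_cast [Nat.cast_sub hT] at h3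
    linarith
  have hsum : ∑ t ∈ Finset.range T, gd7 n η w₁ s t
      = (T : ℝ) * w₁ - η * c * ((T : ℝ) * ((T : ℝ) - 1) / 2) := by
    rw [Finset.sum_congr rfl (fun t _ => gd7_pos n η w₁ s hw hη.le (by rw [← hrdef, ← hcdef]; exact hc0) t)]
    rw [Finset.sum_sub_distrib, Finset.sum_const, ← Finset.mul_sum, hgauss]
    simp only [Finset.card_range, nsmul_eq_mul, hcdef, hrdef]
  have hAeq : (T : ℝ)⁻¹ * ∑ t ∈ Finset.range T, gd7 n η w₁ s t
      = w₁ - η * c * (((T : ℝ) - 1) / 2) := by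
    rw [hsum]; field_simp
  have hTm : (0 : ℝ) ≤ (T : ℝ) - 1 := by linarith
  have hApos : 0 < w₁ - η * c * (((T : ℝ) - 1) / 2) := by
    nlinarith [mul_nonneg (mul_nonneg hη.le (neg_nonneg.mpr hc0)) hTm]
  rw [hAeq]
  unfold F7
  rw [abs_of_pos hApos, abs_of_pos hw, ← hrdef, ← hr2]
  rw [div_add_div _ _ (by positivity) (by positivity),
    div_le_div_iff₀ (by positivity) (by positivity)]
  have hc' : c * (4 * r) ≤ -1 := by
    have := mul_le_mul_of_nonneg_right hc (by positivity : (0:ℝ) ≤ 4 * r)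
    calc c * (4 * r) ≤ -(1 / (4 * r)) * (4 * r) := this
    _ = -1 := by field_simp
  have hkey : 0 ≤ (η * ((T : ℝ) - 1) * (r * r)) * (-(c * (4 * r)) - 1) :=
    mul_nonneg (mul_nonneg (mul_nonneg hη.le hTm) (mul_nonneg hr.le hr.le)) (by linarith)
  nlinarith [hkey]

lemma key7 (n : ℕ) (hn : 2 ≤ n) (η : ℝ) (hη : 0 < η) (T : ℕ) (hT : 1 ≤ T) (w₁ : ℝ)
    (hw : w₁ ≠ 0) (s : ℝ) (hs : s ≤ -(1 / (2 * Real.sqrt n))) :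
    |w₁| / (4 * Real.sqrt n) + η * ((T : ℝ) - 1) / (32 * n) ≤
      F7 n ((T : ℝ)⁻¹ * ∑ t ∈ Finset.range T, gd7 n η w₁ s t) := by
  rcases hw.lt_or_gt with h | h
  · have hneg : ∀ t, gd7 n η w₁ s t = -gd7 n η (-w₁) s t := by
      intro t
      rw [← gd7_neg n η (-w₁) s t, neg_neg]
    have : (T : ℝ)⁻¹ * ∑ t ∈ Finset.range T, gd7 n η w₁ s t
        = -((T : ℝ)⁻¹ * ∑ t ∈ Finset.range T, gd7 n η (-w₁) s t) := by
      rw [Finset.sum_congr rfl (fun t _ => hneg t), Finset.sum_neg_distrib]; ring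
    rw [this]
    unfold F7
    rw [abs_neg, ← abs_neg w₁]
    exact key_pos n hn η hη T hT (-w₁) (by linarith) s hs
  · exact key_pos n hn η hη T hT w₁ h s hs

theorem statement7 (n : ℕ) (hn : 2 ≤ n) (hev : Even n) :
    -- (a) the population loss is `|w|/(4√n)`, convex, with unique minimizer 0 and `F(0) = 0`
    (∀ w : ℝ, ((1 : ℝ)/2) * f7 n w (zval true) + ((1 : ℝ)/2) * f7 n w (zval false) = F7 n w) ∧
    ConvexOn ℝ Set.univ (F7 n) ∧
    F7 n 0 = 0 ∧ (∀ w : ℝ, w ≠ 0 → 0 < F7 n w) ∧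
    -- (b) lower bound for gradient descent
    (∀ (η : ℝ), 0 < η → ∀ T : ℕ, 1 ≤ T → ∀ w₁ : ℝ, w₁ ≠ 0 →
      -- with probability at least 1/(15e) over the sample,
      -- `F(ŵ_T) ≥ |w₁|/(4√n) + η(T−1)/(32n)`
      (1 / (15 * Real.exp 1) ≤
        ∑ z : Fin n → Bool,
          (if |w₁| / (4 * Real.sqrt n) + η * ((T : ℝ) - 1) / (32 * n) ≤
              F7 n ((T : ℝ)⁻¹ * ∑ t ∈ Finset.range T,
                gd7 n η w₁ ((n : ℝ)⁻¹ * ∑ i, zval (z i)) t)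
            then ((1 : ℝ)/2) ^ n else 0)) ∧
      -- in particular, `E[F(ŵ_T)] − inf F ≥ η(T−1)/(480·e·n)`
      (η * ((T : ℝ) - 1) / (480 * Real.exp 1 * n) ≤
        (∑ z : Fin n → Bool,
            ((1 : ℝ)/2) ^ n * F7 n ((T : ℝ)⁻¹ * ∑ t ∈ Finset.range T,
              gd7 n η w₁ ((n : ℝ)⁻¹ * ∑ i, zval (z i)) t))
          - ⨅ w, F7 n w)) := by
  have hn0 : (0:ℝ) < n := by
    have : 0 < n := by omega
    exact_mod_cast this
  have hsr : (0:ℝ) < Real.sqrt n := Real.sqrt_pos.mpr hn0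
  have hF7nonneg : ∀ w : ℝ, 0 ≤ F7 n w := by
    intro w; unfold F7; positivity
  refine ⟨?_, ?_, ?_, ?_, ?_⟩
  · intro w; simp [f7, F7, zval]; ring
  · have h : F7 n = fun w : ℝ => (4 * Real.sqrt n)⁻¹ • ‖w‖ := by
      funext w
      simp only [F7, Real.norm_eq_abs, smul_eq_mul]
      ring
    rw [h]
    exact convexOn_univ_norm.smul (by positivity)
  · simp [F7]
  · intro w hw
    exact div_pos (abs_pos.mpr hw) (by positivity)
  · intro η hη T hT w₁ hw
    have hT1 : (1:ℝ) ≤ (T:ℝ) := by exact_mod_cast hT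
    have hEs : ∀ z : Fin n → Bool, (∑ i, zval (z i) ≤ -(Real.sqrt n / 2)) →
        (n:ℝ)⁻¹ * ∑ i, zval (z i) ≤ -(1 / (2 * Real.sqrt n)) := by
      intro z hz
      have hkey : (n:ℝ)⁻¹ * (Real.sqrt n / 2) = 1 / (2 * Real.sqrt n) := by
        rw [show ((n:ℝ)) = Real.sqrt n * Real.sqrt n from (Real.mul_self_sqrt hn0.le).symm]
        field_simp
        rw [Real.sqrt_sq hsr.le]
      calc (n:ℝ)⁻¹ * ∑ i, zval (z i) ≤ (n:ℝ)⁻¹ * (-(Real.sqrt n / 2)) :=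
            mul_le_mul_of_nonneg_left hz (by positivity)
        _ = -((n:ℝ)⁻¹ * (Real.sqrt n / 2)) := by ring
        _ = -(1 / (2 * Real.sqrt n)) := by rw [hkey]
    have hfirst : 1 / (15 * Real.exp 1) ≤
        ∑ z : Fin n → Bool,
          (if |w₁| / (4 * Real.sqrt n) + η * ((T : ℝ) - 1) / (32 * n) ≤
              F7 n ((T : ℝ)⁻¹ * ∑ t ∈ Finset.range T,
                gd7 n η w₁ ((n : ℝ)⁻¹ * ∑ i, zval (z i)) t)
            then ((1 : ℝ)/2) ^ n else 0) := by
      have hterm : ∀ z : Fin n → Bool,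
          (if (∑ i, zval (z i) ≤ -(Real.sqrt n / 2)) then ((1:ℝ)/2)^n else 0) ≤
          (if |w₁| / (4 * Real.sqrt n) + η * ((T : ℝ) - 1) / (32 * n) ≤
              F7 n ((T : ℝ)⁻¹ * ∑ t ∈ Finset.range T,
                gd7 n η w₁ ((n : ℝ)⁻¹ * ∑ i, zval (z i)) t)
            then ((1 : ℝ)/2) ^ n else 0) := by
        intro z
        by_cases hz : (∑ i, zval (z i) ≤ -(Real.sqrt n / 2))
        · rw [if_pos hz, if_pos (key7 n hn η hη T hT w₁ hw _ (hEs z hz))]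
        · rw [if_neg hz]
          split_ifs with h
          · positivity
          · exact le_refl 0
      calc 1 / (15 * Real.exp 1)
          ≤ (((Finset.univ.filter fun z : Fin n → Bool =>
              ∑ i, zval (z i) ≤ -(Real.sqrt n / 2)).card : ℝ) * ((1:ℝ)/2) ^ n) :=
            count7 n hn hev
        _ = ∑ z : Fin n → Bool,
              (if (∑ i, zval (z i) ≤ -(Real.sqrt n / 2)) then ((1:ℝ)/2)^n else 0) := by
            rw [← Finset.sum_filter, Finset.sum_const, nsmul_eq_mul]
        _ ≤ _ := Finset.sum_le_sum fun z _ => hterm z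
    refine ⟨hfirst, ?_⟩
    have hinf : (⨅ w, F7 n w) = 0 := by
      apply le_antisymm
      · have hb : BddBelow (Set.range (F7 n)) := ⟨0, by rintro x ⟨w, rfl⟩; exact hF7nonneg w⟩
        have h := ciInf_le hb 0
        rwa [show F7 n 0 = 0 by simp [F7]] at h
      · exact le_ciInf fun w => hF7nonneg w
    rw [hinf, sub_zero]
    have hb1 : 0 ≤ η * ((T:ℝ) - 1) / (32 * n) := by
      apply div_nonneg (mul_nonneg hη.le (by linarith)) (by positivity)
    have hbound0 : 0 ≤ |w₁| / (4 * Real.sqrt n) + η * ((T:ℝ) - 1) / (32 * n) :=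
      add_nonneg (by positivity) hb1
    have hterm2 : ∀ z : Fin n → Bool,
        (if |w₁| / (4 * Real.sqrt n) + η * ((T : ℝ) - 1) / (32 * n) ≤
            F7 n ((T : ℝ)⁻¹ * ∑ t ∈ Finset.range T,
              gd7 n η w₁ ((n : ℝ)⁻¹ * ∑ i, zval (z i)) t)
          then ((1 : ℝ)/2) ^ n else 0) *
            (|w₁| / (4 * Real.sqrt n) + η * ((T:ℝ) - 1) / (32 * n)) ≤
        ((1:ℝ)/2) ^ n * F7 n ((T : ℝ)⁻¹ * ∑ t ∈ Finset.range T,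
          gd7 n η w₁ ((n : ℝ)⁻¹ * ∑ i, zval (z i)) t) := by
      intro z
      split_ifs with h
      · exact mul_le_mul_of_nonneg_left h (by positivity)
      · rw [zero_mul]
        apply mul_nonneg (by positivity) (hF7nonneg _)
    have hexp0 : (0:ℝ) < Real.exp 1 := Real.exp_pos 1
    calc η * ((T : ℝ) - 1) / (480 * Real.exp 1 * n)
        = (1 / (15 * Real.exp 1)) * (η * ((T:ℝ) - 1) / (32 * n)) := by
          rw [div_mul_div_comm, one_mul,
            show (480:ℝ) * Real.exp 1 * n = 15 * Real.exp 1 * (32 * n) from by ring]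
      _ ≤ (1 / (15 * Real.exp 1)) *
            (|w₁| / (4 * Real.sqrt n) + η * ((T:ℝ) - 1) / (32 * n)) := by
          apply mul_le_mul_of_nonneg_left _ (by positivity)
          exact le_add_of_nonneg_left (by positivity)
      _ ≤ (∑ z : Fin n → Bool,
            (if |w₁| / (4 * Real.sqrt n) + η * ((T : ℝ) - 1) / (32 * n) ≤
                F7 n ((T : ℝ)⁻¹ * ∑ t ∈ Finset.range T,
                  gd7 n η w₁ ((n : ℝ)⁻¹ * ∑ i, zval (z i)) t)
              then ((1 : ℝ)/2) ^ n else 0)) *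
            (|w₁| / (4 * Real.sqrt n) + η * ((T:ℝ) - 1) / (32 * n)) :=
          mul_le_mul_of_nonneg_right hfirst hbound0
      _ = ∑ z : Fin n → Bool,
            (if |w₁| / (4 * Real.sqrt n) + η * ((T : ℝ) - 1) / (32 * n) ≤
                F7 n ((T : ℝ)⁻¹ * ∑ t ∈ Finset.range T,
                  gd7 n η w₁ ((n : ℝ)⁻¹ * ∑ i, zval (z i)) t)
              then ((1 : ℝ)/2) ^ n else 0) *
              (|w₁| / (4 * Real.sqrt n) + η * ((T:ℝ) - 1) / (32 * n)) := by
          rw [Finset.sum_mul]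
      _ ≤ _ := Finset.sum_le_sum fun z _ => hterm2 z
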